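/- Let a, b ∈ (0,1) with b < a and a+b > 1, and define for x ∈ (a+b−1, b) the function I(x) = c·K(arcsin(ξ(x)), m) where c = (2/π²)·sgn(b−a)/√(b(1−b)), ξ(x) = √((1−b)(b−x)/((1−a)(a−x))), m = a(1−a)/(b(1−b)), and K(φ,m) = ∫₀^φ (1−m·sin²θ)^(−1/2) dθ. Then I′(x) = π⁻²·(x(a−x)(b−x)(1+x−a−b))^(−1/2). -/

import Mathlib

set_option maxHeartbeats 1000000
open Real

theorem stmt16 (a b : ℝ) (ha : a ∈ Set.Ioo (0:ℝ) 1) (hb : b ∈ Set.Ioo (0:ℝ) 1)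
    (hba : b < a) (hab : 1 < a + b) (x : ℝ) (hx : x ∈ Set.Ioo (a + b - 1) b) :
    HasDerivAt (fun y : ℝ =>
      (2 / Real.pi ^ 2) * ((b - a) / |b - a|) / Real.sqrt (b * (1 - b)) *
        ∫ θ in (0:ℝ)..(Real.arcsin (Real.sqrt ((1 - b) * (b - y) / ((1 - a) * (a - y))))),
          (1 - (a * (1 - a) / (b * (1 - b))) * Real.sin θ ^ 2) ^ (-(1/2 : ℝ)))
      ((Real.pi ^ 2)⁻¹ * (x * (a - x) * (b - x) * (1 + x - a - b)) ^ (-(1/2 : ℝ))) x := by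
  obtain ⟨ha0, ha1⟩ := ha
  obtain ⟨hb0, hb1⟩ := hb
  obtain ⟨hx1, hx2⟩ := hx
  have hx0 : 0 < x := by linarith
  have hax : 0 < a - x := by linarith
  have hbx : 0 < b - x := by linarith
  have hamb : 0 < a - b := by linarith
  have h4 : 0 < 1 + x - a - b := by linarith
  have h1a : 0 < 1 - a := by linarith
  have h1b : 0 < 1 - b := by linarith
  have hπ : Real.pi ≠ 0 := Real.pi_ne_zero
  set m := a * (1 - a) / (b * (1 - b)) with hm
  set u := (1 - b) * (b - x) / ((1 - a) * (a - x)) with hu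
  set W := (-(1 - b) * ((1 - a) * (a - x)) - (1 - b) * (b - x) * -(1 - a)) / ((1 - a) * (a - x)) ^ 2 with hWdef
  have hu0 : 0 < u := div_pos (mul_pos h1b hbx) (mul_pos h1a hax)
  have hu1 : u < 1 := by rw [hu, div_lt_one (mul_pos h1a hax)]; nlinarith
  -- inner rational function derivative
  have hnum : HasDerivAt (fun y : ℝ => (1 - b) * (b - y)) (-(1 - b)) x := by
    simpa using ((hasDerivAt_id x).const_sub b).const_mul (1 - b)
  have hden : HasDerivAt (fun y : ℝ => (1 - a) * (a - y)) (-(1 - a)) x := by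
    simpa using ((hasDerivAt_id x).const_sub a).const_mul (1 - a)
  have hw : HasDerivAt (fun y : ℝ => (1 - b) * (b - y) / ((1 - a) * (a - y))) W x :=
    hnum.div hden (ne_of_gt (mul_pos h1a hax))
  -- sqrt
  have hg : HasDerivAt (fun y : ℝ => Real.sqrt ((1 - b) * (b - y) / ((1 - a) * (a - y))))
      (1 / (2 * Real.sqrt u) * W) x := (Real.hasDerivAt_sqrt (ne_of_gt hu0)).comp x hw
  set ξ := Real.sqrt u with hξdef
  have hξ0 : 0 < ξ := Real.sqrt_pos.mpr hu0
  have hξ1 : ξ < 1 := by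
    have h := Real.sqrt_lt_sqrt hu0.le hu1
    simpa using h
  -- arcsin
  have harc : HasDerivAt Real.arcsin (1 / Real.sqrt (1 - ξ ^ 2)) ξ :=
    Real.hasDerivAt_arcsin (ne_of_gt (show (-1:ℝ) < ξ by linarith)) (ne_of_lt hξ1)
  have hφ : HasDerivAt (fun y : ℝ =>
      Real.arcsin (Real.sqrt ((1 - b) * (b - y) / ((1 - a) * (a - y)))))
      (1 / Real.sqrt (1 - ξ ^ 2) * (1 / (2 * Real.sqrt u) * W)) x := by
    have h := harc.comp x hg; exact h
  -- integrand continuity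
  have hm0 : 0 < m := div_pos (mul_pos ha0 h1a) (mul_pos hb0 h1b)
  have hm1 : m < 1 := by rw [hm, div_lt_one (mul_pos hb0 h1b)]; nlinarith
  have hbase : ∀ θ : ℝ, 0 < 1 - m * Real.sin θ ^ 2 := by
    intro θ
    have h1 : Real.sin θ ^ 2 ≤ 1 := Real.sin_sq_le_one θ
    nlinarith [sq_nonneg (Real.sin θ)]
  have hfc : Continuous (fun θ : ℝ => (1 - m * Real.sin θ ^ 2) ^ (-(1/2) : ℝ)) :=
    Continuous.rpow_const (continuous_const.sub (continuous_const.mul (Real.continuous_sin.pow 2))) (fun θ => Or.inl (ne_of_gt (hbase θ)))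
  have hG : HasDerivAt (fun t : ℝ => ∫ θ in (0:ℝ)..t, (1 - m * Real.sin θ ^ 2) ^ (-(1/2) : ℝ))
      ((1 - m * Real.sin (Real.arcsin ξ) ^ 2) ^ (-(1/2) : ℝ)) (Real.arcsin ξ) :=
    intervalIntegral.integral_hasDerivAt_right (hfc.intervalIntegrable 0 (Real.arcsin ξ))
      (hfc.stronglyMeasurableAtFilter _ _) hfc.continuousAt
  have hcomp := hG.comp x hφ
  have hfinal := hcomp.const_mul ((2 / Real.pi ^ 2) * ((b - a) / |b - a|) / Real.sqrt (b * (1 - b)))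
  -- value equality
  have hsin : Real.sin (Real.arcsin ξ) = ξ := Real.sin_arcsin (by linarith) hξ1.le
  have hξsq : ξ ^ 2 = u := Real.sq_sqrt hu0.le
  have hval : (2 / Real.pi ^ 2) * ((b - a) / |b - a|) / Real.sqrt (b * (1 - b)) *
      ((1 - m * Real.sin (Real.arcsin ξ) ^ 2) ^ (-(1/2) : ℝ) *
        (1 / Real.sqrt (1 - ξ ^ 2) * (1 / (2 * Real.sqrt u) * W))) =
      (Real.pi ^ 2)⁻¹ * (x * (a - x) * (b - x) * (1 + x - a - b)) ^ (-(1/2 : ℝ)) := by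
    rw [hsin, hξsq]
    have hratio : (b - a) / |b - a| = -1 := by
      rw [abs_of_neg (show b - a < 0 by linarith), div_neg,
        div_self (ne_of_lt (show b - a < 0 by linarith))]
    rw [hratio]
    have hA : 1 - m * u = x * (a - b) / (b * (a - x)) := by
      rw [hm, hu]; field_simp; ring
    have hB : (1:ℝ) - u = (a - b) * (1 + x - a - b) / ((1 - a) * (a - x)) := by
      rw [hu]; field_simp; ring
    rw [hA, hB, hu, hWdef]
    have hPpos : (0:ℝ) < x * (a - x) * (b - x) * (1 + x - a - b) := by positivity
    have hApos : (0:ℝ) < x * (a - b) / (b * (a - x)) := by positivity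
    rw [Real.rpow_neg hPpos.le, Real.rpow_neg hApos.le, ← Real.sqrt_eq_rpow,
      ← Real.sqrt_eq_rpow]
    rw [show Real.sqrt (x * (a - x) * (b - x) * (1 + x - a - b)) =
        Real.sqrt x * Real.sqrt (a - x) * Real.sqrt (b - x) * Real.sqrt (1 + x - a - b) from by
      rw [Real.sqrt_mul (by positivity), Real.sqrt_mul (by positivity),
        Real.sqrt_mul (by positivity)]]
    rw [show Real.sqrt (x * (a - b) / (b * (a - x))) =
        Real.sqrt x * Real.sqrt (a - b) / (Real.sqrt b * Real.sqrt (a - x)) from by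
      rw [Real.sqrt_div (by positivity), Real.sqrt_mul (by positivity),
        Real.sqrt_mul (by positivity)]]
    rw [show Real.sqrt ((a - b) * (1 + x - a - b) / ((1 - a) * (a - x))) =
        Real.sqrt (a - b) * Real.sqrt (1 + x - a - b) / (Real.sqrt (1 - a) * Real.sqrt (a - x)) from by
      rw [Real.sqrt_div (by positivity), Real.sqrt_mul (by positivity),
        Real.sqrt_mul (by positivity)]]
    rw [show Real.sqrt ((1 - b) * (b - x) / ((1 - a) * (a - x))) =
        Real.sqrt (1 - b) * Real.sqrt (b - x) / (Real.sqrt (1 - a) * Real.sqrt (a - x)) from by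
      rw [Real.sqrt_div (by positivity), Real.sqrt_mul (by positivity),
        Real.sqrt_mul (by positivity)]]
    rw [show Real.sqrt (b * (1 - b)) = Real.sqrt b * Real.sqrt (1 - b) from
      Real.sqrt_mul (by positivity) _]
    set s1 := Real.sqrt x with hs1
    set s2 := Real.sqrt (a - x) with hs2
    set s3 := Real.sqrt (b - x) with hs3
    set s4 := Real.sqrt (1 + x - a - b) with hs4
    set s5 := Real.sqrt b with hs5
    set s6 := Real.sqrt (1 - b) with hs6
    set s7 := Real.sqrt (1 - a) with hs7
    set s8 := Real.sqrt (a - b) with hs8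
    have e1 : s1 ^ 2 = x := Real.sq_sqrt hx0.le
    have e2 : s2 ^ 2 = a - x := Real.sq_sqrt hax.le
    have e3 : s3 ^ 2 = b - x := Real.sq_sqrt hbx.le
    have e4 : s4 ^ 2 = 1 + x - a - b := Real.sq_sqrt h4.le
    have e5 : s5 ^ 2 = b := Real.sq_sqrt hb0.le
    have e6 : s6 ^ 2 = 1 - b := Real.sq_sqrt h1b.le
    have e7 : s7 ^ 2 = 1 - a := Real.sq_sqrt h1a.le
    have e8 : s8 ^ 2 = a - b := Real.sq_sqrt hamb.le
    have p1 : 0 < s1 := Real.sqrt_pos.mpr hx0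
    have p2 : 0 < s2 := Real.sqrt_pos.mpr hax
    have p3 : 0 < s3 := Real.sqrt_pos.mpr hbx
    have p4 : 0 < s4 := Real.sqrt_pos.mpr h4
    have p5 : 0 < s5 := Real.sqrt_pos.mpr hb0
    have p6 : 0 < s6 := Real.sqrt_pos.mpr h1b
    have p7 : 0 < s7 := Real.sqrt_pos.mpr h1a
    have p8 : 0 < s8 := Real.sqrt_pos.mpr hamb
    rw [← e2, ← e3, ← e6, ← e7]
    field_simp
    linear_combination e2 - e3 - e8
  rw [← hval]
  exact hfinal
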